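/- arXiv:2602.08769 — 3 statements merged into one kernel-verified Lean document; each statement's English description precedes it below -/
import Mathlib

section
/- Suppose c > 1 and x, y, z, k > 0 satisfy (z/(k·x))·c^{y/x} < 1. Define d := (x²·z·c^{y/x}) / (k·x² + (x+y)·z·c^{y/x}·ln c). Then c^{-(y-d)/(x+d)}·k·d < z. -/
set_option maxHeartbeats 1000000 in
theorem trans_eq_lemma (c x y z k d : ℝ) (hc : 1 < c) (hx : 0 < x) (hy : 0 < y)
    (hz : 0 < z) (hk : 0 < k)
    (hsmall : (z / (k * x)) * c ^ (y / x) < 1)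
    (hd : d = (x ^ 2 * z * c ^ (y / x)) /
        (k * x ^ 2 + (x + y) * z * c ^ (y / x) * Real.log c)) :
    c ^ (-((y - d) / (x + d))) * k * d < z := by
  have hc0 : (0:ℝ) < c := lt_trans one_pos hc
  have hL : 0 < Real.log c := Real.log_pos hc
  set L := Real.log c with hLdef
  set A := c ^ (y / x) with hAdef
  have hA : 0 < A := Real.rpow_pos_of_pos hc0 _
  have hzA : z * A < k * x := by
    rw [div_mul_eq_mul_div, div_lt_one (by positivity)] at hsmall
    exact hsmall
  set D := k * x ^ 2 + (x + y) * z * A * L with hDdef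
  have hW : 0 < (x + y) * z * A * L := by positivity
  have hD : 0 < D := by positivity
  have hdD : d * D = x ^ 2 * z * A := by
    rw [hd]; field_simp
  have hdpos : 0 < d := by
    rw [hd]; positivity
  have hxd : 0 < x + d := by linarith
  set t := d * (x + y) * L / (x * (x + d)) with htdef
  have ht0 : 0 < t := by positivity
  set B := c ^ ((y - d) / (x + d)) with hBdef
  have hB : 0 < B := Real.rpow_pos_of_pos hc0 _
  have hAeq : A = B * Real.exp t := by
    rw [hAdef, hBdef, Real.rpow_def_of_pos hc0, Real.rpow_def_of_pos hc0,
      ← Real.exp_add]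
    congr 1
    rw [htdef]
    field_simp
    ring
  have htD : t * D < (x + y) * z * A * L := by
    rw [htdef, div_mul_eq_mul_div, div_lt_iff₀ (by positivity)]
    have h5 : (x + y) * L * (d * D) = (x + y) * L * (x ^ 2 * z * A) := by
      rw [hdD]
    nlinarith [h5, mul_pos (mul_pos (mul_pos (mul_pos (mul_pos (add_pos hx hy) hz) hA) hL) hx) hdpos]
  have ht1 : t < 1 := by nlinarith
  have hexp1 : Real.exp t * (1 - t) ≤ 1 := by
    have h1 : -t + 1 ≤ Real.exp (-t) := Real.add_one_le_exp _
    have h2 : Real.exp t * Real.exp (-t) = 1 := by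
      rw [← Real.exp_add]; simp
    nlinarith [Real.exp_pos t]
  have hkey : k * x ^ 2 * Real.exp t < D := by
    have h3 : k * x ^ 2 < D * (1 - t) := by nlinarith
    nlinarith [mul_le_mul_of_nonneg_left hexp1 hD.le,
      mul_lt_mul_of_pos_left h3 (Real.exp_pos t)]
  have hmain : k * d < z * B := by
    have heq : k * d * D = z * B * (k * x ^ 2 * Real.exp t) := by
      calc k * d * D = k * (x ^ 2 * z * A) := by rw [← hdD]; ring
        _ = z * B * (k * x ^ 2 * Real.exp t) := by rw [hAeq]; ring
    have hlt : k * d * D < z * B * D := by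
      rw [heq]
      exact mul_lt_mul_of_pos_left hkey (mul_pos hz hB)
    exact lt_of_mul_lt_mul_right hlt hD.le
  have hrw : c ^ (-((y - d) / (x + d))) * k * d = k * d / B := by
    rw [Real.rpow_neg hc0.le, ← hBdef]; ring
  rw [hrw, div_lt_iff₀ hB]
  linarith [hmain]
end

section
/- With ν and (p_s) as above, for all t > 0, -t²·(d/dt)∫₀^∞ e^{-xt}·ν(x) dx = Σ_s (1 - e^{-p_s t} - t·p_s·e^{-p_s t}). -/
open MeasureTheory Real Set
open scoped ENNReal NNReal

lemma single_int (u q : ℝ) (hu : 0 < u) (hq : 0 ≤ q) :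
    ∫ x in Set.Ioi (0:ℝ), Real.exp (-x*u) * (if x < q then (1:ℝ) else 0)
      = (1 - Real.exp (-q*u))/u := by
  have h1 : ∀ x : ℝ, Real.exp (-x*u) * (if x < q then (1:ℝ) else 0)
      = (Set.Iio q).indicator (fun x => Real.exp (-x*u)) x := by
    intro x
    by_cases h : x < q <;> simp [Set.indicator, h]
  simp_rw [h1]
  rw [MeasureTheory.setIntegral_indicator measurableSet_Iio]
  have : Set.Ioi (0:ℝ) ∩ Set.Iio q = Set.Ioo 0 q := rfl
  rw [this, ← MeasureTheory.integral_Ioc_eq_integral_Ioo,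
    ← intervalIntegral.integral_of_le hq]
  have key : ∀ x ∈ Set.uIcc (0:ℝ) q,
      HasDerivAt (fun y => -(Real.exp (-y*u)/u)) (Real.exp (-x*u)) x := by
    intro x _
    have h2 : HasDerivAt (fun y : ℝ => -y*u) (-u) x := by
      simpa using ((hasDerivAt_id x).neg.mul_const u)
    have h3 := (h2.exp.div_const u).neg
    rw [show Real.exp (-x*u) = -(Real.exp (-x*u) * -u / u) by field_simp]
    exact h3
  rw [intervalIntegral.integral_eq_sub_of_hasDerivAt key
    (Continuous.intervalIntegrable (by continuity) 0 q)]
  field_simp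
  simp only [mul_zero, neg_zero, Real.exp_zero]; ring

theorem laplace_nu_deriv {ι : Type*} [Countable ι] (p : ι → ℝ)
    (hp : ∀ s, 0 ≤ p s) (hsum : Summable p) (t : ℝ) (ht : 0 < t) :
    -t ^ 2 * deriv (fun u : ℝ => ∫ x in Set.Ioi (0 : ℝ),
        Real.exp (-x * u) * (∑' s : ι, if x < p s then (1 : ℝ) else 0)) t =
      ∑' s : ι, (1 - Real.exp (-(p s) * t) - t * p s * Real.exp (-(p s) * t)) := by
  set f : ι → ℝ → ℝ := fun s u => 1 - Real.exp (-(p s) * u) with hf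
  set f' : ι → ℝ → ℝ := fun s u => p s * Real.exp (-(p s) * u) with hf'
  have hderiv : ∀ s u, HasDerivAt (f s) (f' s u) u := by
    intro s u
    have h2 : HasDerivAt (fun y : ℝ => -(p s)*y) (-(p s)) u := by
      simpa using (hasDerivAt_id u).const_mul (-(p s))
    have h3 := (hasDerivAt_const u (1:ℝ)).sub h2.exp
    rw [show f' s u = 0 - Real.exp (-(p s) * u) * -(p s) by simp only [hf']; ring]
    exact h3
  have hbound : ∀ s u, u ∈ Set.Ioi (0:ℝ) → ‖f' s u‖ ≤ p s := by
    intro s u hu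
    have h1 : Real.exp (-(p s) * u) ≤ 1 := by
      apply Real.exp_le_one_iff.mpr
      nlinarith [mul_nonneg (hp s) (le_of_lt hu)]
    have h2 : 0 ≤ f' s u := mul_nonneg (hp s) (Real.exp_pos _).le
    rw [Real.norm_eq_abs, abs_of_nonneg h2]
    calc p s * Real.exp (-(p s) * u) ≤ p s * 1 :=
          mul_le_mul_of_nonneg_left h1 (hp s)
      _ = p s := mul_one _
  have hft_le : ∀ s u, 0 ≤ u → 0 ≤ f s u ∧ f s u ≤ p s * u := by
    intro s u hu
    have hpu : 0 ≤ p s * u := mul_nonneg (hp s) hu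
    constructor
    · have h1 : Real.exp (-(p s) * u) ≤ 1 := by
        apply Real.exp_le_one_iff.mpr; nlinarith
      simp only [hf]; linarith
    · have := Real.add_one_le_exp (-(p s) * u)
      have h2 : 1 - Real.exp (-(p s)*u) ≤ p s * u := by
        nlinarith [Real.exp_pos (-(p s)*u)]
      simpa [hf] using h2
  have hsum0 : Summable (fun s => f s t) :=
    Summable.of_nonneg_of_le (fun s => (hft_le s t ht.le).1)
      (fun s => (hft_le s t ht.le).2) (hsum.mul_right t)
  have hsumf' : Summable (fun s => f' s t) :=
    Summable.of_nonneg_of_le (fun s => mul_nonneg (hp s) (Real.exp_pos _).le)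
      (fun s => (le_abs_self _).trans (by simpa using hbound s t ht)) hsum
  have hG : HasDerivAt (fun u => ∑' s, f s u) (∑' s, f' s t) t :=
    hasDerivAt_tsum_of_isPreconnected hsum isOpen_Ioi (convex_Ioi 0).isPreconnected
      (fun s u _ => hderiv s u) hbound ht hsum0 ht
  have hF : HasDerivAt (fun u => (∑' s, f s u)/u)
      (((∑' s, f' s t) * t - (∑' s, f s t) * 1)/t^2) t :=
    hG.div (hasDerivAt_id t) (ne_of_gt ht)
  have heq : (fun u : ℝ => ∫ x in Set.Ioi (0 : ℝ),
      Real.exp (-x * u) * (∑' s : ι, if x < p s then (1 : ℝ) else 0))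
      =ᶠ[nhds t] (fun u => (∑' s, f s u)/u) := by
    filter_upwards [Ioi_mem_nhds ht] with u hu
    have hu' : (0:ℝ) < u := hu
    have key : ∀ x : ℝ, Real.exp (-x * u) * (∑' s : ι, if x < p s then (1 : ℝ) else 0)
        = ∑' s : ι, Real.exp (-x * u) * (if x < p s then (1 : ℝ) else 0) :=
      fun x => tsum_mul_left.symm
    simp_rw [key]
    rw [MeasureTheory.integral_tsum]
    · have hval : ∀ s, ∫ x in Set.Ioi (0:ℝ),
          Real.exp (-x*u) * (if x < p s then (1:ℝ) else 0) = (1 - Real.exp (-(p s)*u))/u :=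
        fun s => single_int u (p s) hu' (hp s)
      simp_rw [hval]
      exact tsum_div_const
    · intro s
      apply AEStronglyMeasurable.mul
      · exact (Real.continuous_exp.comp
          (continuous_id.neg.mul continuous_const)).aestronglyMeasurable
      · have hind : (fun x : ℝ => (if x < p s then (1:ℝ) else 0))
            = (Set.Iio (p s)).indicator (fun _ => (1:ℝ)) := by
          ext x; by_cases h : x < p s <;> simp [Set.indicator, h]
        rw [hind]
        exact ((measurable_const.indicator measurableSet_Iio)).aestronglyMeasurable
    · have hb : ∀ s : ι, ∫⁻ x in Set.Ioi (0:ℝ),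
          ‖Real.exp (-x*u) * (if x < p s then (1:ℝ) else 0)‖₊ ≤ ENNReal.ofReal (p s) := by
        intro s
        have hle : ∀ᵐ x ∂(volume.restrict (Set.Ioi (0:ℝ))),
            (‖Real.exp (-x*u) * (if x < p s then (1:ℝ) else 0)‖₊ : ℝ≥0∞)
            ≤ (Set.Iio (p s)).indicator (fun _ => (1:ℝ≥0∞)) x := by
          rw [ae_restrict_iff' measurableSet_Ioi]
          filter_upwards with x hx
          by_cases h : x < p s
          · have hxe : Real.exp (-x*u) ≤ 1 := by
              apply Real.exp_le_one_iff.mpr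
              nlinarith [Set.mem_Ioi.mp hx]
            have : (‖Real.exp (-x*u) * (if x < p s then (1:ℝ) else 0)‖₊ : ℝ≥0∞)
                = ENNReal.ofReal (Real.exp (-x*u)) := by
              simp [h, ← enorm_eq_nnnorm, Real.enorm_eq_ofReal (Real.exp_pos _).le]
            rw [this, Set.indicator_of_mem (Set.mem_Iio.mpr h)]
            calc ENNReal.ofReal (Real.exp (-x*u)) ≤ ENNReal.ofReal 1 :=
                  ENNReal.ofReal_le_ofReal hxe
              _ = 1 := ENNReal.ofReal_one
          · simp [h, Set.indicator_of_notMem (show x ∉ Set.Iio (p s) by simpa using h)]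
        calc ∫⁻ x in Set.Ioi (0:ℝ), ‖Real.exp (-x*u) * (if x < p s then (1:ℝ) else 0)‖₊
            ≤ ∫⁻ x in Set.Ioi (0:ℝ), (Set.Iio (p s)).indicator (fun _ => (1:ℝ≥0∞)) x :=
              lintegral_mono_ae hle
          _ = volume (Set.Iio (p s) ∩ Set.Ioi 0) := by
              rw [lintegral_indicator measurableSet_Iio, setLIntegral_one,
                Measure.restrict_apply measurableSet_Iio]
          _ ≤ ENNReal.ofReal (p s) := by
              have h2 : Set.Iio (p s) ∩ Set.Ioi 0 = Set.Ioo 0 (p s) := by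
                ext x; simp [Set.mem_Ioo, and_comm]
              rw [h2, Real.volume_Ioo]
              simp
      have hfin : (∑' s : ι, ∫⁻ x in Set.Ioi (0:ℝ),
          ‖Real.exp (-x*u) * (if x < p s then (1:ℝ) else 0)‖₊) < ⊤ := by
        calc (∑' s : ι, ∫⁻ x in Set.Ioi (0:ℝ),
              ‖Real.exp (-x*u) * (if x < p s then (1:ℝ) else 0)‖₊)
            ≤ ∑' s, ENNReal.ofReal (p s) := ENNReal.tsum_le_tsum hb
          _ = ENNReal.ofReal (∑' s, p s) := (ENNReal.ofReal_tsum_of_nonneg hp hsum).symm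
          _ < ⊤ := ENNReal.ofReal_lt_top
      exact hfin.ne
  rw [heq.deriv_eq, hF.deriv]
  have ht2 : t^2 ≠ 0 := pow_ne_zero 2 (ne_of_gt ht)
  have halg : -t ^ 2 * (((∑' s, f' s t) * t - (∑' s, f s t) * 1) / t ^ 2)
      = (∑' s, f s t) - t * (∑' s, f' s t) := by
    field_simp
    ring
  rw [halg, ← tsum_mul_left, ← Summable.tsum_sub hsum0 (hsumf'.mul_left t)]
  apply tsum_congr
  intro s
  simp only [hf, hf']
  ring
end

section
/- Let X be a nonnegative-integer-valued random variable admitting a size-biased coupling X^{[b]} with X^{[b]} - X ≤ B almost surely for a constant B > 0 and X^{[b]} ≥ X. Then for all z ≥ 0, P(X - E[X] ≤ -z) ≤ exp(-z²/(2B·E[X])). -/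
open MeasureTheory Real Filter

lemma aux_exp_mul_le_one {t : ℝ} (_ht : 0 ≤ t) : Real.exp (-t) * (1 + t) ≤ 1 := by
  have h := Real.add_one_le_exp t
  calc Real.exp (-t) * (1 + t) ≤ Real.exp (-t) * Real.exp t :=
        mul_le_mul_of_nonneg_left (by linarith) (Real.exp_nonneg _)
    _ = 1 := by rw [← Real.exp_add]; simp

lemma aux_exp_sub_sq_le {x : ℝ} (hx : 0 ≤ x) : Real.exp (x - x ^ 2) ≤ 1 + x := by
  have h1 : (0:ℝ) < 1 + x := by linarith
  have h2 : 1 - (1 + x)⁻¹ ≤ Real.log (1 + x) := Real.one_sub_inv_le_log_of_pos h1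
  have hy : (1 + x)⁻¹ * (1 + x) = 1 := inv_mul_cancel₀ (ne_of_gt h1)
  have h3 : x - x ^ 2 ≤ Real.log (1 + x) := by nlinarith [pow_nonneg hx 3, sq_nonneg x]
  calc Real.exp (x - x ^ 2) ≤ Real.exp (Real.log (1 + x)) := Real.exp_le_exp.mpr h3
    _ = 1 + x := Real.exp_log h1

lemma aux_gauss (n : ℕ) : ∑ j ∈ Finset.range n, ((j:ℝ) + 1) = n * (n + 1) / 2 := by
  induction n with
  | zero => simp
  | succ k ih => rw [Finset.sum_range_succ, ih]; push_cast; ring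

set_option maxHeartbeats 1000000 in
theorem size_biased_lower_tail {Ω : Type*} [MeasurableSpace Ω]
    (μ : Measure Ω) [IsProbabilityMeasure μ]
    (X Xb : Ω → ℕ) (hX : Measurable X) (hXb : Measurable Xb)
    (hXint : Integrable (fun ω => (X ω : ℝ)) μ)
    (hmean : 0 < ∫ ω, (X ω : ℝ) ∂μ)
    (B : ℝ) (hB : 0 < B)
    (hcoupling : ∀ᵐ ω ∂μ, (X ω : ℝ) ≤ Xb ω ∧ (Xb ω : ℝ) - X ω ≤ B)
    (hsize : ∀ f : ℕ → ℝ, (∃ C : ℝ, ∀ n, |f n| ≤ C) →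
      ∫ ω, f (Xb ω) ∂μ = (∫ ω, (X ω : ℝ) * f (X ω) ∂μ) / ∫ ω, (X ω : ℝ) ∂μ) :
    ∀ z : ℝ, 0 ≤ z →
      (μ {ω | (X ω : ℝ) - ∫ ω', (X ω' : ℝ) ∂μ ≤ -z}).toReal ≤
        Real.exp (-z ^ 2 / (2 * B * ∫ ω, (X ω : ℝ) ∂μ)) := by
  intro z hz
  set m : ℝ := ∫ ω, (X ω : ℝ) ∂μ with hm
  clear_value m
  have hm0 : m ≠ 0 := ne_of_gt hmean
  -- integrability of bounded functions of a measurable ℕ-valued map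
  have hint : ∀ (g : ℕ → ℝ) (C : ℝ), (∀ n, |g n| ≤ C) → ∀ (Y : Ω → ℕ), Measurable Y →
      Integrable (fun ω => g (Y ω)) μ := by
    intro g C hg Y hY
    refine (integrable_const C).mono' ((measurable_from_top.comp hY).aestronglyMeasurable) ?_
    filter_upwards with ω
    simpa [Real.norm_eq_abs] using hg (Y ω)
  set φ : ℝ → ℝ := fun s => ∫ ω, Real.exp (-(s * (X ω : ℝ))) ∂μ with hφ
  clear_value φ
  have hexpbd : ∀ s : ℝ, 0 ≤ s → ∀ n : ℕ, |Real.exp (-(s * (n:ℝ)))| ≤ 1 := by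
    intro s hs n
    rw [abs_of_nonneg (Real.exp_nonneg _)]
    have : (0:ℝ) ≤ s * n := by positivity
    exact Real.exp_le_one_iff.mpr (by linarith)
  have hIexp : ∀ s : ℝ, 0 ≤ s → ∀ (Y : Ω → ℕ), Measurable Y →
      Integrable (fun ω => Real.exp (-(s * (Y ω : ℝ)))) μ := by
    intro s hs Y hY
    exact hint (fun n => Real.exp (-(s * (n:ℝ)))) 1 (hexpbd s hs) Y hY
  have hφ0 : φ 0 = 1 := by simp [hφ]
  -- the one-step inequality
  have step : ∀ s h : ℝ, 0 ≤ s → 0 ≤ h →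
      φ (s + h) * (1 + h * m * Real.exp (-((s + h) * B))) ≤ φ s := by
    intro s h hs hh
    rcases eq_or_lt_of_le hh with rfl | hh'
    · simp
    set t := s + h with ht
    clear_value t
    have hts : 0 < t := by rw [ht]; linarith
    have hI1 : Integrable (fun ω => Real.exp (-(t * (X ω : ℝ)))) μ := hIexp t hts.le X hX
    have hI3 : Integrable (fun ω => Real.exp (-(t * (Xb ω : ℝ)))) μ := hIexp t hts.le Xb hXb
    have hbound2 : ∀ n : ℕ, |(n:ℝ) * Real.exp (-(t * (n:ℝ)))| ≤ 1 / t := by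
      intro n
      have hn : (0:ℝ) ≤ n := n.cast_nonneg
      rw [abs_of_nonneg (by positivity), le_div_iff₀ hts]
      have h1 := Real.add_one_le_exp (t * (n:ℝ))
      have h2 : Real.exp (-(t * (n:ℝ))) * Real.exp (t * (n:ℝ)) = 1 := by
        rw [← Real.exp_add]; simp
      nlinarith [Real.exp_nonneg (-(t * (n:ℝ))), Real.exp_pos (t * (n:ℝ))]
    have hI2 : Integrable (fun ω => (X ω : ℝ) * Real.exp (-(t * (X ω : ℝ)))) μ :=
      hint (fun n => (n:ℝ) * Real.exp (-(t * (n:ℝ)))) (1/t) hbound2 X hX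
    have hkey : ∫ ω, (X ω : ℝ) * Real.exp (-(t * (X ω : ℝ))) ∂μ
        = m * ∫ ω, Real.exp (-(t * (Xb ω : ℝ))) ∂μ := by
      have hs' := hsize (fun n => Real.exp (-(t * (n:ℝ)))) ⟨1, hexpbd t hts.le⟩
      rw [hs']
      rw [mul_div_assoc', mul_div_cancel_left₀ _ hm0]
    have hcb : Real.exp (-(t * B)) * φ t ≤ ∫ ω, Real.exp (-(t * (Xb ω : ℝ))) ∂μ := by
      have heq : Real.exp (-(t * B)) * φ t
          = ∫ ω, Real.exp (-(t * B)) * Real.exp (-(t * (X ω : ℝ))) ∂μ := by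
        simp only [hφ]; exact (integral_const_mul _ _).symm
      rw [heq]
      refine integral_mono_ae (hI1.const_mul _) hI3 ?_
      filter_upwards [hcoupling] with ω hω
      rw [← Real.exp_add]
      apply Real.exp_le_exp.mpr
      nlinarith [hω.2, hts.le]
    have hmain : φ t + h * ∫ ω, (X ω : ℝ) * Real.exp (-(t * (X ω : ℝ))) ∂μ ≤ φ s := by
      have hpt : ∀ ω, Real.exp (-(t * (X ω : ℝ))) + h * ((X ω : ℝ) * Real.exp (-(t * (X ω : ℝ))))
          ≤ Real.exp (-(s * (X ω : ℝ))) := by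
        intro ω
        have hx : (0:ℝ) ≤ X ω := Nat.cast_nonneg _
        have h1 := aux_exp_mul_le_one (t := h * (X ω : ℝ)) (by positivity)
        have h2 : Real.exp (-(t * (X ω : ℝ)))
            = Real.exp (-(s * (X ω : ℝ))) * Real.exp (-(h * (X ω : ℝ))) := by
          rw [← Real.exp_add]; congr 1; rw [ht]; ring
        have h3 := Real.exp_nonneg (-(s * (X ω : ℝ)))
        have h4 := mul_le_mul_of_nonneg_left h1 h3
        rw [h2]; nlinarith [h4]
      calc φ t + h * ∫ ω, (X ω : ℝ) * Real.exp (-(t * (X ω : ℝ))) ∂μ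
          = ∫ ω, (Real.exp (-(t * (X ω : ℝ)))
              + h * ((X ω : ℝ) * Real.exp (-(t * (X ω : ℝ))))) ∂μ := by
            simp only [hφ]
            rw [integral_add hI1 (hI2.const_mul h), integral_const_mul]
        _ ≤ ∫ ω, Real.exp (-(s * (X ω : ℝ))) ∂μ :=
            integral_mono (hI1.add (hI2.const_mul h)) (hIexp s hs X hX) hpt
        _ = φ s := by simp only [hφ]
    calc φ t * (1 + h * m * Real.exp (-(t * B)))
        = φ t + h * (m * (Real.exp (-(t * B)) * φ t)) := by ring
      _ ≤ φ t + h * (m * ∫ ω, Real.exp (-(t * (Xb ω : ℝ))) ∂μ) := by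
          have := mul_le_mul_of_nonneg_left hcb hmean.le
          nlinarith [mul_le_mul_of_nonneg_left this hh]
      _ = φ t + h * ∫ ω, (X ω : ℝ) * Real.exp (-(t * (X ω : ℝ))) ∂μ := by rw [hkey]
      _ ≤ φ s := hmain
  -- the mgf bound
  have mgf : ∀ θ : ℝ, 0 ≤ θ → φ θ ≤ Real.exp (-(m * θ) + m * B * θ ^ 2 / 2) := by
    intro θ hθ
    set A : ℝ := -(m * θ) + m * B * θ ^ 2 / 2 with hA
    set D : ℝ := m * B * θ ^ 2 / 2 + m ^ 2 * θ ^ 2 with hD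
    clear_value A D
    have key : ∀ n : ℕ, 1 ≤ n → φ θ ≤ Real.exp (A + D / n) := by
      intro n hn
      have hn0 : (0:ℝ) < n := by exact_mod_cast hn
      have hne : (n:ℝ) ≠ 0 := ne_of_gt hn0
      set h : ℝ := θ / n with hh
      have hhn : 0 ≤ h := by rw [hh]; positivity
      clear_value h
      set c : ℕ → ℝ := fun j => h * m * Real.exp (-(((j:ℝ) + 1) * h * B)) with hc
      clear_value c
      have hhm : 0 ≤ h * m := mul_nonneg hhn hmean.le
      have hcnn : ∀ j, 0 ≤ c j := fun j => by
        simp only [hc]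
        exact mul_nonneg hhm (Real.exp_nonneg _)
      have ind : ∀ k : ℕ, φ ((k:ℝ) * h) * ∏ j ∈ Finset.range k, (1 + c j) ≤ 1 := by
        intro k
        induction k with
        | zero => simp [hφ0]
        | succ k ih =>
          have hst := step ((k:ℝ) * h) h (mul_nonneg (Nat.cast_nonneg k) hhn) hhn
          have hst' : φ (((k:ℕ) + 1 : ℕ) * h) * (1 + c k) ≤ φ ((k:ℝ) * h) := by
            have e1 : (((k:ℕ) + 1 : ℕ) : ℝ) * h = (k:ℝ) * h + h := by push_cast; ring
            have e2 : c k = h * m * Real.exp (-(((k:ℝ) * h + h) * B)) := by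
              simp only [hc]; congr 2; ring
            rw [e1, e2]; exact hst
          have hPnn : 0 ≤ ∏ j ∈ Finset.range k, (1 + c j) :=
            Finset.prod_nonneg fun j _ => by nlinarith [hcnn j]
          rw [Finset.prod_range_succ]
          calc φ (((k:ℕ) + 1 : ℕ) * h) * ((∏ j ∈ Finset.range k, (1 + c j)) * (1 + c k))
              = (φ (((k:ℕ) + 1 : ℕ) * h) * (1 + c k)) * ∏ j ∈ Finset.range k, (1 + c j) := by
                ring
            _ ≤ φ ((k:ℝ) * h) * ∏ j ∈ Finset.range k, (1 + c j) :=
                mul_le_mul_of_nonneg_right hst' hPnn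
            _ ≤ 1 := ih
      have hcle : ∀ j, c j ≤ h * m := by
        intro j
        have hnn : (0:ℝ) ≤ ((j:ℝ) + 1) * h * B :=
          mul_nonneg (mul_nonneg (by positivity) hhn) hB.le
        have h1 : Real.exp (-(((j:ℝ) + 1) * h * B)) ≤ 1 :=
          Real.exp_le_one_iff.mpr (by linarith)
        simp only [hc]
        nlinarith
      have hprod_ge : Real.exp (∑ j ∈ Finset.range n, (c j - (c j) ^ 2))
          ≤ ∏ j ∈ Finset.range n, (1 + c j) := by
        rw [Real.exp_sum]
        exact Finset.prod_le_prod (fun j _ => (Real.exp_pos _).le)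
          (fun j _ => aux_exp_sub_sq_le (hcnn j))
      have hsum1 : m * θ - m * B * θ ^ 2 * ((n:ℝ) + 1) / (2 * n)
          ≤ ∑ j ∈ Finset.range n, c j := by
        have hterm : ∀ j ∈ Finset.range n, h * m * (1 - ((j:ℝ) + 1) * h * B) ≤ c j := by
          intro j _
          have h1 := Real.add_one_le_exp (-(((j:ℝ) + 1) * h * B))
          simp only [hc]
          nlinarith
        have hsum : ∑ j ∈ Finset.range n, h * m * (1 - ((j:ℝ) + 1) * h * B)
            = m * θ - m * B * θ ^ 2 * ((n:ℝ) + 1) / (2 * n) := by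
          rw [← Finset.mul_sum]
          have hq : ∑ j ∈ Finset.range n, (1 - ((j:ℝ) + 1) * h * B)
              = (n:ℝ) - ((n:ℝ) * ((n:ℝ) + 1) / 2) * (h * B) := by
            rw [Finset.sum_sub_distrib, Finset.sum_const, Finset.card_range]
            simp only [mul_assoc]
            rw [← Finset.sum_mul, aux_gauss]
            push_cast; ring
          rw [hq, hh]
          field_simp
        rw [← hsum]
        exact Finset.sum_le_sum hterm
      have hsum2 : ∑ j ∈ Finset.range n, (c j) ^ 2 ≤ m ^ 2 * θ ^ 2 / n := by
        calc ∑ j ∈ Finset.range n, (c j) ^ 2 ≤ ∑ j ∈ Finset.range n, (h * m) ^ 2 :=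
              Finset.sum_le_sum fun j _ => by nlinarith [hcnn j, hcle j]
          _ = (n:ℝ) * (h * m) ^ 2 := by
              rw [Finset.sum_const, Finset.card_range, nsmul_eq_mul]
          _ = m ^ 2 * θ ^ 2 / n := by rw [hh]; field_simp
      have hθn : θ = (n:ℝ) * h := by rw [hh]; field_simp
      have h1 : φ θ * ∏ j ∈ Finset.range n, (1 + c j) ≤ 1 := by
        rw [hθn]; exact ind n
      have hPpos : 0 < ∏ j ∈ Finset.range n, (1 + c j) :=
        Finset.prod_pos fun j _ => by nlinarith [hcnn j]
      have h2 : φ θ ≤ (∏ j ∈ Finset.range n, (1 + c j))⁻¹ := by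
        rw [← one_div, le_div_iff₀ hPpos]
        exact h1
      have h3 : (∏ j ∈ Finset.range n, (1 + c j))⁻¹
          ≤ Real.exp (-(∑ j ∈ Finset.range n, (c j - (c j) ^ 2))) := by
        rw [Real.exp_neg]
        exact inv_anti₀ (Real.exp_pos _) hprod_ge
      have h4 : -(∑ j ∈ Finset.range n, (c j - (c j) ^ 2)) ≤ A + D / n := by
        rw [Finset.sum_sub_distrib]
        have heq : m * B * θ ^ 2 * ((n:ℝ) + 1) / (2 * n)
            = m * B * θ ^ 2 / 2 + m * B * θ ^ 2 / (2 * n) := by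
          field_simp
        have heq2 : A + D / n = -(m * θ) + m * B * θ ^ 2 / 2
            + (m * B * θ ^ 2 / (2 * n) + m ^ 2 * θ ^ 2 / n) := by
          rw [hA, hD]; field_simp
        rw [heq2]
        linarith [hsum1, hsum2, heq]
      calc φ θ ≤ (∏ j ∈ Finset.range n, (1 + c j))⁻¹ := h2
        _ ≤ Real.exp (-(∑ j ∈ Finset.range n, (c j - (c j) ^ 2))) := h3
        _ ≤ Real.exp (A + D / n) := Real.exp_le_exp.mpr h4
    have hlim : Tendsto (fun n : ℕ => Real.exp (A + D / n)) atTop (nhds (Real.exp A)) := by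
      have h0 : Tendsto (fun n : ℕ => A + D / n) atTop (nhds (A + 0)) :=
        tendsto_const_nhds.add (tendsto_const_div_atTop_nhds_zero_nat D)
      rw [add_zero] at h0
      exact (Real.continuous_exp.tendsto _).comp h0
    refine ge_of_tendsto hlim ?_
    filter_upwards [eventually_ge_atTop 1] with n hn using key n hn
  -- Chernoff argument
  set θ : ℝ := z / (m * B) with hθdef
  have hmB : 0 < m * B := mul_pos hmean hB
  have hθ : 0 ≤ θ := by rw [hθdef]; positivity
  clear_value θ
  have hb := mgf θ hθ
  have hIθ : Integrable (fun ω => Real.exp (-(θ * (X ω : ℝ)))) μ := hIexp θ hθ X hX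
  set ε : ℝ := Real.exp (-(θ * (m - z))) with hε
  clear_value ε
  have hεpos : 0 < ε := by rw [hε]; exact Real.exp_pos _
  have markov := mul_meas_ge_le_integral_of_nonneg
    (f := fun ω => Real.exp (-(θ * (X ω : ℝ))))
    (Filter.Eventually.of_forall fun ω => Real.exp_nonneg _) hIθ ε
  have hsub : {ω | (X ω : ℝ) - m ≤ -z} ⊆ {ω | ε ≤ Real.exp (-(θ * (X ω : ℝ)))} := by
    intro ω hω
    simp only [Set.mem_setOf_eq] at hω ⊢
    rw [hε]
    apply Real.exp_le_exp.mpr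
    nlinarith [mul_le_mul_of_nonneg_left (show (X ω : ℝ) ≤ m - z by linarith) hθ]
  have hmono : (μ {ω | (X ω : ℝ) - m ≤ -z}).toReal
      ≤ (μ {ω | ε ≤ Real.exp (-(θ * (X ω : ℝ)))}).toReal :=
    ENNReal.toReal_mono (measure_ne_top μ _) (measure_mono hsub)
  have hfin1 : (μ {ω | (X ω : ℝ) - m ≤ -z}).toReal ≤ φ θ / ε := by
    rw [le_div_iff₀ hεpos]
    calc (μ {ω | (X ω : ℝ) - m ≤ -z}).toReal * ε
        ≤ (μ {ω | ε ≤ Real.exp (-(θ * (X ω : ℝ)))}).toReal * ε :=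
          mul_le_mul_of_nonneg_right hmono hεpos.le
      _ = ε * (μ {ω | ε ≤ Real.exp (-(θ * (X ω : ℝ)))}).toReal := by ring
      _ ≤ ∫ ω, Real.exp (-(θ * (X ω : ℝ))) ∂μ := markov
      _ = φ θ := by simp only [hφ]
  have hfin2 : φ θ / ε ≤ Real.exp (-z ^ 2 / (2 * B * m)) := by
    rw [div_le_iff₀ hεpos]
    calc φ θ ≤ Real.exp (-(m * θ) + m * B * θ ^ 2 / 2) := hb
      _ = Real.exp (-z ^ 2 / (2 * B * m)) * ε := by
          rw [hε, ← Real.exp_add]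
          congr 1
          rw [hθdef]
          field_simp
          ring
  exact le_trans hfin1 hfin2
end
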